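/- Let B, C, D be simple graphs on the same vertex set V with |V| = n that are rainbow-triangle-free, and suppose B is nearly matchable, i.e., B contains a matching of some size ℓ with 2ℓ ≥ n − 2. Then |C| + |D| ≤ 2·⌊n²/4⌋. -/

import Mathlib

open Finset

lemma four_ite_le_two (p q r s : Prop) [Decidable p] [Decidable q] [Decidable r] [Decidable s]
    (h1 : ¬(p ∧ s)) (h2 : ¬(q ∧ r)) :
    (if p then 1 else 0) + (if q then 1 else 0) + (if r then 1 else 0) + (if s then 1 else 0) ≤ 2 := by
  by_cases hp : p <;> by_cases hq : q <;> by_cases hr : r <;> by_cases hs : s <;> simp_all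

lemma pair_inter_card_le {α : Type*} [DecidableEq α] (x y : α) (N : Finset α) :
    ((({x, y} : Finset α)) ∩ N).card ≤ (if x ∈ N then 1 else 0) + (if y ∈ N then 1 else 0) := by
  by_cases hx : x ∈ N <;> by_cases hy : y ∈ N <;> simp only [hx, hy, if_true, if_false]
  · calc (({x, y} : Finset α) ∩ N).card ≤ ({x, y} : Finset α).card :=
        card_le_card inter_subset_left
      _ ≤ 2 := (card_insert_le _ _).trans (by simp)
  · refine (card_le_card (fun z hz => ?_)).trans (le_of_eq (card_singleton x))
    simp only [mem_inter, mem_insert, mem_singleton] at hz ⊢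
    rcases hz with ⟨h | h, hN⟩
    · exact h
    · exact absurd (h ▸ hN) hy
  · refine (card_le_card (fun z hz => ?_)).trans (le_of_eq (card_singleton y))
    simp only [mem_inter, mem_insert, mem_singleton] at hz ⊢
    rcases hz with ⟨h | h, hN⟩
    · exact absurd (h ▸ hN) hx
    · exact h
  · refine le_of_eq ?_
    rw [Finset.card_eq_zero]
    ext z; simp only [mem_inter, mem_insert, mem_singleton, notMem_empty, iff_false, not_and]
    rintro (rfl | rfl) <;> assumption


lemma deg_le_aux {V : Type*} [Fintype V] [DecidableEq V] (G : SimpleGraph V) [DecidableRel G.Adj]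
    {ℓ : ℕ} (a b : Fin ℓ → V) (v : V) :
    G.degree v ≤ (∑ i, ((if G.Adj (a i) v then 1 else 0) + (if G.Adj (b i) v then 1 else 0)))
      + ((G.neighborFinset v) \ (univ.biUnion fun i => {a i, b i})).card := by
  set N := G.neighborFinset v with hN
  set Wf := univ.biUnion fun i => ({a i, b i} : Finset V) with hWf
  have h1 : G.degree v = (N ∩ Wf).card + (N \ Wf).card := by
    rw [Finset.card_inter_add_card_sdiff]
    rfl
  have hsplit : N ∩ Wf = univ.biUnion (fun i => ({a i, b i} : Finset V) ∩ N) := by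
    ext x
    simp only [hWf, mem_inter, mem_biUnion, mem_univ, true_and]
    tauto
  have h2 : (N ∩ Wf).card ≤ ∑ i, (({a i, b i} : Finset V) ∩ N).card := by
    rw [hsplit]; exact Finset.card_biUnion_le
  have h3 : ∀ i : Fin ℓ, (({a i, b i} : Finset V) ∩ N).card ≤
      (if G.Adj (a i) v then 1 else 0) + (if G.Adj (b i) v then 1 else 0) := by
    intro i
    refine (pair_inter_card_le _ _ _).trans (le_of_eq ?_)
    simp [hN, SimpleGraph.mem_neighborFinset, SimpleGraph.adj_comm]
  have h4 : ∑ i, (({a i, b i} : Finset V) ∩ N).card ≤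
      ∑ i, ((if G.Adj (a i) v then 1 else 0) + (if G.Adj (b i) v then 1 else 0)) :=
    Finset.sum_le_sum fun i _ => h3 i
  omega

lemma sum_sdiff_deg {V : Type*} [Fintype V] [DecidableEq V] (G : SimpleGraph V)
    [DecidableRel G.Adj] (Wf : Finset V) :
    ∑ v, ((G.neighborFinset v) \ Wf).card = ∑ u ∈ univ \ Wf, G.degree u := by
  have h1 : ∀ v, ((G.neighborFinset v) \ Wf).card
      = ∑ u ∈ univ \ Wf, (if G.Adj v u then 1 else 0) := by
    intro v
    have : (G.neighborFinset v) \ Wf = (univ \ Wf).filter (fun u => G.Adj v u) := by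
      ext u
      simp only [mem_sdiff, SimpleGraph.mem_neighborFinset, mem_filter, mem_univ, true_and]
      tauto
    rw [this, Finset.card_filter]
  simp_rw [h1]
  rw [Finset.sum_comm]
  refine Finset.sum_congr rfl fun u _ => ?_
  have : (univ.filter fun v => G.Adj v u) = G.neighborFinset u := by
    ext z; simp [SimpleGraph.mem_neighborFinset, SimpleGraph.adj_comm]
  rw [← Finset.card_filter, this, SimpleGraph.degree]

/-- A family of simple graphs on the vertex set `V`, indexed by `ι`, is
rainbow-triangle-free: there are no pairwise distinct indices `i, j, k` and
distinct vertices `a, b, c` such that `{a,b}` is an edge of `G i`, `{b,c}` is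
an edge of `G j` and `{a,c}` is an edge of `G k`.  (Distinctness of the
vertices is automatic from adjacency.) -/
def RainbowTriangleFree {V ι : Type*} (G : ι → SimpleGraph V) : Prop :=
  ∀ i j k : ι, i ≠ j → j ≠ k → i ≠ k →
    ∀ a b c : V, ¬((G i).Adj a b ∧ (G j).Adj b c ∧ (G k).Adj a c)

theorem stmt_12 {V : Type*} [Fintype V] [DecidableEq V] (n : ℕ) (hV : Fintype.card V = n)
    (B C D : SimpleGraph V)
    [DecidableRel B.Adj] [DecidableRel C.Adj] [DecidableRel D.Adj]
    (hRBT : RainbowTriangleFree ![B, C, D])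
    (hnm : ∃ (ℓ : ℕ) (e : Fin ℓ → Sym2 V), (∀ i, e i ∈ B.edgeSet) ∧
      (∀ i j : Fin ℓ, i ≠ j → ∀ v : V, v ∈ e i → v ∉ e j) ∧ n - 2 ≤ 2 * ℓ) :
    C.edgeFinset.card + D.edgeFinset.card ≤ 2 * (n ^ 2 / 4) := by
  classical
  obtain ⟨ℓ, e, hmem, hdisj, hlen⟩ := hnm
  -- extract endpoints of the matching edges
  have hrep : ∀ i, ∃ p : V × V, e i = s(p.1, p.2) ∧ B.Adj p.1 p.2 := by
    intro i
    obtain ⟨⟨x, y⟩, hp⟩ := Quot.exists_rep (e i)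
    refine ⟨(x, y), hp.symm, ?_⟩
    have h := hmem i
    rw [← hp] at h
    exact h
  choose p hpe hadj using hrep
  set a : Fin ℓ → V := fun i => (p i).1 with ha
  set b : Fin ℓ → V := fun i => (p i).2 with hb
  have hab : ∀ i, B.Adj (a i) (b i) := fun i => hadj i
  have hmemE : ∀ i v, v ∈ e i ↔ v = a i ∨ v = b i := by
    intro i v; rw [hpe i]; exact Sym2.mem_iff
  -- forbidden rainbow configurations
  have hforb1 : ∀ (i : Fin ℓ) (c : V), ¬(C.Adj (a i) c ∧ D.Adj (b i) c) := by
    rintro i c ⟨h1, h2⟩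
    exact hRBT 0 1 2 (by decide) (by decide) (by decide) (b i) (a i) c
      ⟨by simpa using (hab i).symm, by simpa using h1, by simpa using h2⟩
  have hforb2 : ∀ (i : Fin ℓ) (c : V), ¬(C.Adj (b i) c ∧ D.Adj (a i) c) := by
    rintro i c ⟨h1, h2⟩
    exact hRBT 0 1 2 (by decide) (by decide) (by decide) (a i) (b i) c
      ⟨by simpa using hab i, by simpa using h1, by simpa using h2⟩
  have hinc : ∀ (i : Fin ℓ) (c : V),
      ((if C.Adj (a i) c then 1 else 0) + (if C.Adj (b i) c then 1 else 0))
        + ((if D.Adj (a i) c then 1 else 0) + (if D.Adj (b i) c then 1 else 0)) ≤ 2 := by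
    intro i c
    have := four_ite_le_two (C.Adj (a i) c) (C.Adj (b i) c) (D.Adj (a i) c) (D.Adj (b i) c)
      (hforb1 i c) (hforb2 i c)
    omega
  -- the set of matched vertices
  set Wf : Finset V := univ.biUnion (fun i => ({a i, b i} : Finset V)) with hWfdef
  have hWcard : Wf.card = 2 * ℓ := by
    rw [hWfdef, card_biUnion]
    · rw [Finset.sum_congr rfl (fun i _ => Finset.card_pair (hab i).ne)]
      simp [mul_comm]
    · intro i _ j _ hij
      rw [Function.onFun, Finset.disjoint_left]
      intro v hv hv'
      exact hdisj i j hij v ((hmemE i v).2 (by simpa using hv))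
        ((hmemE j v).2 (by simpa using hv'))
  set TC : V → ℕ := fun v => ∑ i, ((if C.Adj (a i) v then 1 else 0)
    + (if C.Adj (b i) v then 1 else 0)) with hTC
  set TD : V → ℕ := fun v => ∑ i, ((if D.Adj (a i) v then 1 else 0)
    + (if D.Adj (b i) v then 1 else 0)) with hTD
  have hT : ∀ v, TC v + TD v ≤ 2 * ℓ := by
    intro v
    rw [hTC, hTD]
    simp only
    rw [← Finset.sum_add_distrib]
    calc (∑ i, (((if C.Adj (a i) v then 1 else 0) + (if C.Adj (b i) v then 1 else 0))
          + ((if D.Adj (a i) v then 1 else 0) + (if D.Adj (b i) v then 1 else 0))))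
        ≤ ∑ _i : Fin ℓ, 2 := Finset.sum_le_sum (fun i _ => hinc i v)
      _ = 2 * ℓ := by simp [mul_comm]
  have hdegC : ∀ v, C.degree v ≤ TC v + ((C.neighborFinset v) \ Wf).card :=
    fun v => deg_le_aux C a b v
  have hdegD : ∀ v, D.degree v ≤ TD v + ((D.neighborFinset v) \ Wf).card :=
    fun v => deg_le_aux D a b v
  -- cardinalities
  have hn : Fintype.card V = n := hV
  have h2ln : 2 * ℓ ≤ n := by
    rw [← hWcard, ← hn]; exact Finset.card_le_univ _
  set Uf : Finset V := univ \ Wf with hUfdef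
  have hUcard : Uf.card = n - 2 * ℓ := by
    rw [hUfdef, Finset.card_sdiff_of_subset (Finset.subset_univ _), hWcard, card_univ, hn]
  -- bound for unmatched vertices
  have hUdeg : ∀ u ∈ Uf, C.degree u + D.degree u ≤ 2 * ℓ + 2 * (Uf.card - 1) := by
    intro u hu
    have hsubC : (C.neighborFinset u) \ Wf ⊆ Uf.erase u := by
      intro z hz
      rw [mem_sdiff] at hz
      rw [Finset.mem_erase]
      refine ⟨?_, by rw [hUfdef, mem_sdiff]; exact ⟨mem_univ _, hz.2⟩⟩
      intro h; subst h
      exact C.irrefl ((SimpleGraph.mem_neighborFinset _ _ _).mp hz.1)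
    have hsubD : (D.neighborFinset u) \ Wf ⊆ Uf.erase u := by
      intro z hz
      rw [mem_sdiff] at hz
      rw [Finset.mem_erase]
      refine ⟨?_, by rw [hUfdef, mem_sdiff]; exact ⟨mem_univ _, hz.2⟩⟩
      intro h; subst h
      exact D.irrefl ((SimpleGraph.mem_neighborFinset _ _ _).mp hz.1)
    have hce : (Uf.erase u).card = Uf.card - 1 := Finset.card_erase_of_mem hu
    have h1 := hdegC u
    have h2 := hdegD u
    have h3 := hT u
    have h4 := Finset.card_le_card hsubC
    have h5 := Finset.card_le_card hsubD
    omega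
  -- main count
  have hsumT : ∑ v, (TC v + TD v) ≤ n * (2 * ℓ) := by
    calc ∑ v, (TC v + TD v) ≤ ∑ _v : V, 2 * ℓ := Finset.sum_le_sum fun v _ => hT v
      _ = n * (2 * ℓ) := by rw [Finset.sum_const, card_univ, hn]; simp [mul_comm]
  have hkey : 2 * (C.edgeFinset.card + D.edgeFinset.card)
      ≤ n * (2 * ℓ) + Uf.card * (2 * ℓ + 2 * (Uf.card - 1)) := by
    have hC2 : ∑ v, C.degree v = 2 * C.edgeFinset.card :=
      SimpleGraph.sum_degrees_eq_twice_card_edges C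
    have hD2 : ∑ v, D.degree v = 2 * D.edgeFinset.card :=
      SimpleGraph.sum_degrees_eq_twice_card_edges D
    have hCb : ∑ v, C.degree v ≤ ∑ v, TC v + ∑ v, ((C.neighborFinset v) \ Wf).card := by
      rw [← Finset.sum_add_distrib]; exact Finset.sum_le_sum fun v _ => hdegC v
    have hDb : ∑ v, D.degree v ≤ ∑ v, TD v + ∑ v, ((D.neighborFinset v) \ Wf).card := by
      rw [← Finset.sum_add_distrib]; exact Finset.sum_le_sum fun v _ => hdegD v
    have hCs : ∑ v, ((C.neighborFinset v) \ Wf).card = ∑ u ∈ Uf, C.degree u :=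
      sum_sdiff_deg C Wf
    have hDs : ∑ v, ((D.neighborFinset v) \ Wf).card = ∑ u ∈ Uf, D.degree u :=
      sum_sdiff_deg D Wf
    have hU : ∑ u ∈ Uf, C.degree u + ∑ u ∈ Uf, D.degree u
        ≤ Uf.card * (2 * ℓ + 2 * (Uf.card - 1)) := by
      rw [← Finset.sum_add_distrib]
      calc ∑ u ∈ Uf, (C.degree u + D.degree u)
          ≤ ∑ _u ∈ Uf, (2 * ℓ + 2 * (Uf.card - 1)) := Finset.sum_le_sum hUdeg
        _ = Uf.card * (2 * ℓ + 2 * (Uf.card - 1)) := by rw [Finset.sum_const]; simp [mul_comm]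
    have hTT : ∑ v, TC v + ∑ v, TD v ≤ n * (2 * ℓ) := by
      rw [← Finset.sum_add_distrib]; exact hsumT
    omega
  -- final arithmetic
  have hu2 : Uf.card ≤ 2 := by omega
  have hncases : Uf.card = 0 ∨ Uf.card = 1 ∨ Uf.card = 2 := by omega
  rw [pow_two]
  rcases hncases with h | h | h
  · have hne : n = 2 * ℓ := by omega
    have hnn : n * n = 4 * (ℓ * ℓ) := by rw [hne]; ring
    have hrhs : n * (2 * ℓ) + Uf.card * (2 * ℓ + 2 * (Uf.card - 1)) = 4 * (ℓ * ℓ) := by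
      rw [h, hne]; ring
    rw [hnn]
    rw [hrhs] at hkey
    set m := ℓ * ℓ with hm
    omega
  · have hne : n = 2 * ℓ + 1 := by omega
    have hnn : n * n = 4 * (ℓ * ℓ) + 4 * ℓ + 1 := by rw [hne]; ring
    have hrhs : n * (2 * ℓ) + Uf.card * (2 * ℓ + 2 * (Uf.card - 1))
        = 4 * (ℓ * ℓ) + 4 * ℓ := by rw [h, hne]; ring
    rw [hnn]
    rw [hrhs] at hkey
    set m := ℓ * ℓ with hm
    omega
  · have hne : n = 2 * ℓ + 2 := by omega
    have hnn : n * n = 4 * (ℓ * ℓ) + 8 * ℓ + 4 := by rw [hne]; ring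
    have hrhs : n * (2 * ℓ) + Uf.card * (2 * ℓ + 2 * (Uf.card - 1))
        = 4 * (ℓ * ℓ) + 8 * ℓ + 4 := by rw [h, hne]; ring
    rw [hnn]
    rw [hrhs] at hkey
    set m := ℓ * ℓ with hm
    omega
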